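/- Let G be the discrete Heisenberg group of 3×3 upper unitriangular integer matrices, generated by S = (s_1 = X, s_2 = Y, s_3 = Z^5) where X, Y are the elementary matrices with a 1 in positions (1,2) and (2,3) respectively and Z has a 1 in position (1,3). Assign weights w_1 = 1, w_2 = 3/2, w_3 = 3 and let G^𝔴_j be the subgroup generated by images of formal commutators of weight ≥ w̄_j, where w̄_1 = 1, w̄_2 = 3/2, w̄_3 = 2, w̄_4 = 5/2, w̄_5 = 3, w̄_6 = 7/2 are the first weight values. Then: G^𝔴_6 = {e}; G^𝔴_5 = ⟨Z^5⟩ ≅ ℤ; G^𝔴_4 = G^𝔴_3 = ⟨Z⟩ (the full center, ≅ ℤ); G^𝔴_2 = ⟨Y, Z⟩ ≅ ℤ²; G^𝔴_1 = G. Consequently the torsion-free ranks of successive quotients are 1, 1, 0, 0, 1 (for j = 1,...,5), G^𝔴_4/G^𝔴_5 ≅ ℤ/5ℤ, and D(S,𝔴) = Σ_j w̄_j · rank(G^𝔴_j/G^𝔴_{j+1}) = 1 + 3/2 + 3 = 11/2. -/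

import Mathlib

/-- The discrete Heisenberg group: triples `(x,y,z)` of integers representing
the unitriangular matrix with superdiagonal entries `x, y` and corner `z`. -/
@[ext] structure Heis : Type where
  x : ℤ
  y : ℤ
  z : ℤ
  deriving DecidableEq

namespace Heis

instance : Mul Heis := ⟨fun a b => ⟨a.x + b.x, a.y + b.y, a.z + b.z + a.x * b.y⟩⟩
instance : One Heis := ⟨⟨0, 0, 0⟩⟩
instance : Inv Heis := ⟨fun a => ⟨-a.x, -a.y, -a.z + a.x * a.y⟩⟩

lemma mul_def (a b : Heis) :
    a * b = ⟨a.x + b.x, a.y + b.y, a.z + b.z + a.x * b.y⟩ := rfl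
lemma one_def : (1 : Heis) = ⟨0, 0, 0⟩ := rfl
lemma inv_def (a : Heis) : a⁻¹ = ⟨-a.x, -a.y, -a.z + a.x * a.y⟩ := rfl

instance : Group Heis where
  mul_assoc a b c := by
    simp only [mul_def, mk.injEq]; refine ⟨by ring, by ring, by ring⟩
  one_mul a := by simp [mul_def, one_def]
  mul_one a := by simp [mul_def, one_def]
  inv_mul_cancel a := by
    simp only [mul_def, inv_def, one_def, mk.injEq]
    refine ⟨by ring, by ring, by ring⟩

/-- Generators: `X`, `Y`, `Z`. -/
def X : Heis := ⟨1, 0, 0⟩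
def Y : Heis := ⟨0, 1, 0⟩
def Z : Heis := ⟨0, 0, 1⟩

end Heis

/-- Formal commutators over a `k`-letter alphabet with signs. -/
inductive FC (k : ℕ) : Type
  | gen : Fin k → Bool → FC k
  | comm : FC k → FC k → FC k
  deriving DecidableEq

namespace FC

variable {k : ℕ}

/-- Weight of a formal commutator. -/
def weight (w : Fin k → ℝ) : FC k → ℝ
  | gen i _ => w i
  | comm a b => weight w a + weight w b

open scoped commutatorElement in
/-- Image of a formal commutator in a group. -/
def image {G : Type*} [Group G] (S : Fin k → G) : FC k → G
  | gen i b => if b then S i else (S i)⁻¹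
  | comm a b => ⁅image S a, image S b⁆

end FC

/-- The subgroup generated by images of all formal commutators of weight `≥ t`. -/
def weightSubgroup {k : ℕ} {G : Type*} [Group G] (S : Fin k → G) (w : Fin k → ℝ)
    (t : ℝ) : Subgroup G :=
  Subgroup.closure { g | ∃ c : FC k, t ≤ FC.weight w c ∧ FC.image S c = g }

/-- The torsion-free rank of `A/B` for subgroups `B ≤ A`: the largest size of a
family of elements of `A` that is free modulo `B`. -/
noncomputable def tfRank {G : Type*} [Group G] (A B : Subgroup G) : ℕ :=
  sSup { n : ℕ | ∃ f : Fin n → G, (∀ i, f i ∈ A) ∧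
    ∀ x : Fin n → ℤ, (List.ofFn (fun i => f i ^ x i)).prod ∈ B → ∀ i, x i = 0 }

/-- The set of weight values of the weight system. -/
def weightVals {k : ℕ} (w : Fin k → ℝ) : Set ℝ :=
  Set.range (FC.weight w)

/-- The next weight value after `t`. -/
noncomputable def nextVal {k : ℕ} (w : Fin k → ℝ) (t : ℝ) : ℝ :=
  sInf { x ∈ weightVals w | t < x }

/-- `D(S,𝔴) = Σ_j w̄_j rank(G^𝔴_j/G^𝔴_{j+1})`, summed over the weight values. -/
noncomputable def Dval {k : ℕ} {G : Type*} [Group G] (S : Fin k → G)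
    (w : Fin k → ℝ) : ℝ :=
  ∑' t : (weightVals w), (t : ℝ) *
    (tfRank (weightSubgroup S w t) (weightSubgroup S w (nextVal w t)) : ℝ)

section Aux
open Heis Subgroup
open scoped commutatorElement

namespace Heis

lemma commutator_eq (a b : Heis) : ⁅a, b⁆ = ⟨0, 0, a.x * b.y - b.x * a.y⟩ := by
  show a * b * a⁻¹ * b⁻¹ = _
  simp only [mul_def, inv_def, mk.injEq]
  refine ⟨by ring, by ring, by ring⟩

lemma pow_yz (b c : ℤ) (n : ℕ) : (⟨0, b, c⟩ : Heis) ^ n = ⟨0, n * b, n * c⟩ := by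
  induction n with
  | zero => simp [one_def]
  | succ n ih =>
    rw [pow_succ, ih]
    simp only [mul_def, mk.injEq]
    push_cast
    refine ⟨trivial, by ring, by ring⟩

lemma zpow_yz (b c : ℤ) (n : ℤ) : (⟨0, b, c⟩ : Heis) ^ n = ⟨0, n * b, n * c⟩ := by
  cases n with
  | ofNat m => rw [Int.ofNat_eq_natCast, zpow_natCast, pow_yz]
  | negSucc m =>
    rw [zpow_negSucc, pow_yz, inv_def]
    simp only [mk.injEq, Int.negSucc_eq]
    push_cast
    refine ⟨trivial, by ring, by ring⟩

lemma pow_xz (a c : ℤ) (n : ℕ) : (⟨a, 0, c⟩ : Heis) ^ n = ⟨n * a, 0, n * c⟩ := by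
  induction n with
  | zero => simp [one_def]
  | succ n ih =>
    rw [pow_succ, ih]
    simp only [mul_def, mk.injEq]
    push_cast
    refine ⟨by ring, trivial, by ring⟩

lemma zpow_xz (a c : ℤ) (n : ℤ) : (⟨a, 0, c⟩ : Heis) ^ n = ⟨n * a, 0, n * c⟩ := by
  cases n with
  | ofNat m => rw [Int.ofNat_eq_natCast, zpow_natCast, pow_xz]
  | negSucc m =>
    rw [zpow_negSucc, pow_xz, inv_def]
    simp only [mk.injEq, Int.negSucc_eq]
    push_cast
    refine ⟨by ring, trivial, by ring⟩

lemma Z5_eq : (Z ^ 5 : Heis) = ⟨0, 0, 5⟩ := by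
  rw [Z, pow_yz]; norm_num

lemma X_zpow (n : ℤ) : (X : Heis) ^ n = ⟨n, 0, 0⟩ := by rw [X, zpow_xz]; norm_num
lemma Y_zpow (n : ℤ) : (Y : Heis) ^ n = ⟨0, n, 0⟩ := by rw [Y, zpow_yz]; norm_num
lemma Z_zpow (n : ℤ) : (Z : Heis) ^ n = ⟨0, 0, n⟩ := by rw [Z, zpow_yz]; norm_num

/-- The subgroup `{g | g.x = 0}` (= ⟨Y,Z⟩). -/
def Kyz : Subgroup Heis where
  carrier := {g | g.x = 0}
  one_mem' := rfl
  mul_mem' := by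
    intro a b ha hb
    simp only [Set.mem_setOf_eq, mul_def] at *
    omega
  inv_mem' := by
    intro a ha
    simp only [Set.mem_setOf_eq, inv_def] at *
    omega

/-- The center `{g | g.x = 0 ∧ g.y = 0}` (= ⟨Z⟩). -/
def Kz : Subgroup Heis where
  carrier := {g | g.x = 0 ∧ g.y = 0}
  one_mem' := ⟨rfl, rfl⟩
  mul_mem' := by
    intro a b ha hb
    simp only [Set.mem_setOf_eq, mul_def] at *
    omega
  inv_mem' := by
    intro a ha
    simp only [Set.mem_setOf_eq, inv_def] at *
    omega

/-- The subgroup `⟨Z^5⟩`. -/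
def K5 : Subgroup Heis where
  carrier := {g | g.x = 0 ∧ g.y = 0 ∧ (5 : ℤ) ∣ g.z}
  one_mem' := ⟨rfl, rfl, ⟨0, rfl⟩⟩
  mul_mem' := by
    intro a b ha hb
    simp only [Set.mem_setOf_eq, mul_def] at *
    refine ⟨by omega, by omega, ?_⟩
    rcases ha with ⟨ha1, -, ha3⟩
    rw [ha1]
    simpa using dvd_add ha3 hb.2.2
  inv_mem' := by
    intro a ha
    simp only [Set.mem_setOf_eq, inv_def] at *
    obtain ⟨h1, h2, h3⟩ := ha
    exact ⟨by omega, by omega, by rw [h1]; simpa using dvd_neg.2 h3⟩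

lemma mem_Kyz {g : Heis} : g ∈ Kyz ↔ g.x = 0 := Iff.rfl
lemma mem_Kz {g : Heis} : g ∈ Kz ↔ g.x = 0 ∧ g.y = 0 := Iff.rfl
lemma mem_K5 {g : Heis} : g ∈ K5 ↔ g.x = 0 ∧ g.y = 0 ∧ (5 : ℤ) ∣ g.z := Iff.rfl

lemma closure_Z : Subgroup.closure {Z} = Kz := by
  apply le_antisymm
  · rw [Subgroup.closure_le]
    rintro g rfl
    exact ⟨rfl, rfl⟩
  · intro g hg
    obtain ⟨hx, hy⟩ := mem_Kz.mp hg
    have : g = Z ^ g.z := by rw [Z_zpow]; ext <;> simp [hx, hy]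
    rw [this]
    exact zpow_mem (Subgroup.subset_closure (Set.mem_singleton _)) _

lemma closure_Z5 : Subgroup.closure {Z ^ 5} = K5 := by
  apply le_antisymm
  · rw [Subgroup.closure_le]
    rintro g rfl
    rw [Z5_eq]
    exact ⟨rfl, rfl, ⟨1, rfl⟩⟩
  · intro g hg
    obtain ⟨hx, hy, k, hk⟩ := mem_K5.mp hg
    have : g = (Z ^ 5) ^ k := by
      rw [Z5_eq, zpow_yz]; ext <;> simp [hx, hy, hk, mul_comm]
    rw [this]
    exact zpow_mem (Subgroup.subset_closure (Set.mem_singleton _)) k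

lemma closure_YZ : Subgroup.closure {Y, Z} = Kyz := by
  apply le_antisymm
  · rw [Subgroup.closure_le]
    rintro g (rfl | rfl) <;> exact rfl
  · intro g hg
    have hx := mem_Kyz.mp hg
    have : g = Y ^ g.y * Z ^ g.z := by
      rw [Y_zpow, Z_zpow, mul_def]; ext <;> simp [hx]
    rw [this]
    exact mul_mem (zpow_mem (Subgroup.subset_closure (Set.mem_insert _ _)) g.y)
      (zpow_mem (Subgroup.subset_closure (Set.mem_insert_of_mem _ (Set.mem_singleton _))) g.z)

end Heis
end Aux
section Aux2
open Heis FC Subgroup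
open scoped commutatorElement

/-- evaluation of the weight vector -/
lemma wv0 : (![(1:ℝ), 3/2, 3]) 0 = 1 := rfl
lemma wv1 : (![(1:ℝ), 3/2, 3]) 1 = 3/2 := rfl
lemma wv2 : (![(1:ℝ), 3/2, 3]) 2 = 3 := rfl

lemma weight_gen (i : Fin 3) (b : Bool) :
    FC.weight (![(1:ℝ), 3/2, 3]) (FC.gen i b) = (![(1:ℝ), 3/2, 3]) i := rfl

lemma weight_comm (a b : FC 3) :
    FC.weight (![(1:ℝ), 3/2, 3]) (FC.comm a b) =
      FC.weight (![(1:ℝ), 3/2, 3]) a + FC.weight (![(1:ℝ), 3/2, 3]) b := rfl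

lemma exists_half (c : FC 3) :
    ∃ m : ℕ, 2 ≤ m ∧ FC.weight (![(1:ℝ), 3/2, 3]) c = m / 2 := by
  induction c with
  | gen i b =>
    fin_cases i
    · exact ⟨2, le_refl _, by rw [weight_gen]; norm_num⟩
    · exact ⟨3, by norm_num, by rw [weight_gen]; norm_num⟩
    · exact ⟨6, by norm_num, by rw [weight_gen]; norm_num⟩
  | comm a b iha ihb =>
    obtain ⟨m, hm, hma⟩ := iha
    obtain ⟨l, hl, hlb⟩ := ihb
    refine ⟨m + l, by omega, ?_⟩
    rw [weight_comm, hma, hlb]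
    push_cast
    ring

lemma image_comm_eq (a b : FC 3) :
    FC.image (![X, Y, Z ^ 5]) (FC.comm a b) =
      ⟨0, 0, (FC.image (![X, Y, Z ^ 5]) a).x * (FC.image (![X, Y, Z ^ 5]) b).y
        - (FC.image (![X, Y, Z ^ 5]) b).x * (FC.image (![X, Y, Z ^ 5]) a).y⟩ := by
  show ⁅FC.image _ a, FC.image _ b⁆ = _
  rw [commutator_eq]

lemma comm_one_left {g h : Heis} (hx : g.x = 0) (hy : g.y = 0) : ⁅g, h⁆ = 1 := by
  rw [commutator_eq, hx, hy, one_def]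
  simp

lemma comm_one_right {g h : Heis} (hx : h.x = 0) (hy : h.y = 0) : ⁅g, h⁆ = 1 := by
  rw [commutator_eq, hx, hy, one_def]
  simp

lemma image_comm_one (a b : FC 3)
    (h : 3 ≤ FC.weight (![(1:ℝ), 3/2, 3]) (FC.comm a b)) :
    FC.image (![X, Y, Z ^ 5]) (FC.comm a b) = 1 := by
  show ⁅FC.image (![X, Y, Z ^ 5]) a, FC.image (![X, Y, Z ^ 5]) b⁆ = 1
  cases a with
  | comm a1 a2 =>
    have h1 := image_comm_eq a1 a2
    exact comm_one_left (by rw [h1]) (by rw [h1])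
  | gen i bi =>
    cases b with
    | comm b1 b2 =>
      have h1 := image_comm_eq b1 b2
      exact comm_one_right (by rw [h1]) (by rw [h1])
    | gen j bj =>
      rw [weight_comm, weight_gen, weight_gen] at h
      fin_cases i <;> fin_cases j <;>
        first
          | (revert bi bj; decide)
          | (exfalso; norm_num at h)

end Aux2
section Aux3
open Heis FC Subgroup

lemma wsub_le {t : ℝ} {H : Subgroup Heis}
    (h : ∀ c : FC 3, t ≤ FC.weight (![(1:ℝ), 3/2, 3]) c →
      FC.image (![X, Y, Z ^ 5]) c ∈ H) :
    weightSubgroup (![X, Y, Z ^ 5]) (![(1:ℝ), 3/2, 3]) t ≤ H := by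
  rw [weightSubgroup, Subgroup.closure_le]
  rintro g ⟨c, hc, rfl⟩
  exact h c hc

lemma mem_wsub {t : ℝ} (c : FC 3) (h : t ≤ FC.weight (![(1:ℝ), 3/2, 3]) c) :
    FC.image (![X, Y, Z ^ 5]) c ∈
      weightSubgroup (![X, Y, Z ^ 5]) (![(1:ℝ), 3/2, 3]) t :=
  Subgroup.subset_closure ⟨c, h, rfl⟩

lemma X_mem {t : ℝ} (ht : t ≤ 1) :
    X ∈ weightSubgroup (![X, Y, Z ^ 5]) (![(1:ℝ), 3/2, 3]) t := by
  have := mem_wsub (t := t) (FC.gen 0 true) (by rw [weight_gen, wv0]; exact ht)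
  simpa [FC.image] using this

lemma Y_mem {t : ℝ} (ht : t ≤ 3/2) :
    Y ∈ weightSubgroup (![X, Y, Z ^ 5]) (![(1:ℝ), 3/2, 3]) t := by
  have := mem_wsub (t := t) (FC.gen 1 true) (by rw [weight_gen, wv1]; exact ht)
  simpa [FC.image] using this

lemma Z5_mem {t : ℝ} (ht : t ≤ 3) :
    Z ^ 5 ∈ weightSubgroup (![X, Y, Z ^ 5]) (![(1:ℝ), 3/2, 3]) t := by
  have := mem_wsub (t := t) (FC.gen 2 true) (by rw [weight_gen, wv2]; exact ht)
  simpa [FC.image] using this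

lemma Z_mem {t : ℝ} (ht : t ≤ 5/2) :
    Z ∈ weightSubgroup (![X, Y, Z ^ 5]) (![(1:ℝ), 3/2, 3]) t := by
  have := mem_wsub (t := t) (FC.comm (FC.gen 0 true) (FC.gen 1 true))
    (by rw [weight_comm, weight_gen, weight_gen, wv0, wv1]; linarith)
  have himg : FC.image (![X, Y, Z ^ 5])
      (FC.comm (FC.gen 0 true) (FC.gen 1 true)) = Z := by decide
  rwa [himg] at this

lemma ws_one : weightSubgroup (![X, Y, Z ^ 5]) (![(1:ℝ), 3/2, 3]) 1 = ⊤ := by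
  apply le_antisymm le_top
  intro g _
  have hg : g = X ^ g.x * Y ^ g.y * Z ^ (g.z - g.x * g.y) := by
    rw [X_zpow, Y_zpow, Z_zpow, mul_def, mul_def]
    ext <;> simp <;> ring
  rw [hg]
  exact mul_mem (mul_mem (zpow_mem (X_mem le_rfl) _)
    (zpow_mem (Y_mem (by norm_num)) _)) (zpow_mem (Z_mem (by norm_num)) _)

lemma ws_32 : weightSubgroup (![X, Y, Z ^ 5]) (![(1:ℝ), 3/2, 3]) (3/2) = Kyz := by
  apply le_antisymm
  · apply wsub_le
    intro c hc
    cases c with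
    | gen i b =>
      rw [weight_gen] at hc
      rw [mem_Kyz]
      fin_cases i <;> first | (revert b; decide) | (exfalso; norm_num at hc)
    | comm a b =>
      rw [mem_Kyz, image_comm_eq]
  · rw [← closure_YZ, Subgroup.closure_le]
    rintro g (rfl | rfl)
    · exact Y_mem le_rfl
    · exact Z_mem (by norm_num)

lemma ws_Kz {t : ℝ} (h1 : 3/2 < t) (h2 : t ≤ 5/2) :
    weightSubgroup (![X, Y, Z ^ 5]) (![(1:ℝ), 3/2, 3]) t = Kz := by
  apply le_antisymm
  · apply wsub_le
    intro c hc
    cases c with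
    | gen i b =>
      rw [weight_gen] at hc
      rw [mem_Kz]
      fin_cases i <;>
        first | (revert b; decide) | (exfalso; norm_num at hc; linarith)
    | comm a b =>
      rw [mem_Kz, image_comm_eq]
      exact ⟨rfl, rfl⟩
  · rw [← closure_Z, Subgroup.closure_le]
    rintro g rfl
    exact Z_mem h2

lemma ws_3 : weightSubgroup (![X, Y, Z ^ 5]) (![(1:ℝ), 3/2, 3]) 3 = K5 := by
  apply le_antisymm
  · apply wsub_le
    intro c hc
    cases c with
    | gen i b =>
      rw [weight_gen] at hc
      rw [mem_K5]
      fin_cases i <;>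
        first
          | (revert b; decide)
          | (exfalso; norm_num at hc)
    | comm a b =>
      rw [image_comm_one a b hc]
      exact one_mem _
  · rw [← closure_Z5, Subgroup.closure_le]
    rintro g rfl
    exact Z5_mem le_rfl

lemma ws_bot {t : ℝ} (ht : 3 < t) :
    weightSubgroup (![X, Y, Z ^ 5]) (![(1:ℝ), 3/2, 3]) t = ⊥ := by
  apply le_antisymm _ bot_le
  apply wsub_le
  intro c hc
  cases c with
  | gen i b =>
    rw [weight_gen] at hc
    exfalso
    fin_cases i <;> (norm_num at hc; linarith)
  | comm a b =>
    rw [Subgroup.mem_bot]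
    exact image_comm_one a b (by linarith)

end Aux3
section Aux4
open Subgroup

variable {G : Type*} [Group G]

/-- the defining set of `tfRank` -/
def tfSet (A B : Subgroup G) : Set ℕ :=
  { n : ℕ | ∃ f : Fin n → G, (∀ i, f i ∈ A) ∧
    ∀ x : Fin n → ℤ, (List.ofFn (fun i => f i ^ x i)).prod ∈ B → ∀ i, x i = 0 }

lemma tfRank_eq_sSup (A B : Subgroup G) : tfRank A B = sSup (tfSet A B) := rfl

lemma zero_mem_tfSet (A B : Subgroup G) : 0 ∈ tfSet A B :=
  ⟨fun i => i.elim0, fun i => i.elim0, fun _ _ i => i.elim0⟩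

lemma tfSet_prod_mem {n : ℕ} (A : Subgroup G) {f : Fin n → G}
    (hf : ∀ i, f i ∈ A) (x : Fin n → ℤ) :
    (List.ofFn (fun i => f i ^ x i)).prod ∈ A := by
  apply Subgroup.list_prod_mem
  intro g hg
  rw [List.mem_ofFn] at hg
  obtain ⟨i, rfl⟩ := hg
  exact zpow_mem (hf i) _

lemma tfRank_eq_zero_of_pow {A B : Subgroup G} {k : ℤ} (hk : k ≠ 0)
    (h : ∀ g ∈ A, g ^ k ∈ B) : tfRank A B = 0 := by
  rw [tfRank_eq_sSup]
  apply IsGreatest.csSup_eq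
  constructor
  · exact zero_mem_tfSet A B
  · intro n hn
    by_contra hpos
    have hn0 : 0 < n := by omega
    obtain ⟨f, hfA, hfree⟩ := hn
    set i0 : Fin n := ⟨0, hn0⟩
    have hmem : (List.ofFn (fun i => f i ^ (if i = i0 then k else 0))).prod ∈ B := by
      apply Subgroup.list_prod_mem
      intro g hg
      rw [List.mem_ofFn] at hg
      obtain ⟨i, rfl⟩ := hg
      show f i ^ (if i = i0 then k else 0) ∈ B
      by_cases hi : i = i0
      · simp only [hi, if_pos rfl]
        exact h _ (hfA i0)
      · rw [if_neg hi, zpow_zero]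
        exact one_mem B
    have := hfree _ hmem i0
    simp at this
    exact hk this

lemma tfRank_eq_zero_of_le {A B : Subgroup G} (h : A ≤ B) : tfRank A B = 0 :=
  tfRank_eq_zero_of_pow one_ne_zero (fun g hg => by simpa using h hg)

lemma toAdd_listprod {n : ℕ} (v : Fin n → Multiplicative ℤ) :
    (List.ofFn v).prod.toAdd = ∑ i, (v i).toAdd := by
  rw [List.prod_ofFn]
  induction (Finset.univ : Finset (Fin n)) using Finset.induction with
  | empty => simp
  | insert hx ih => simp_all

lemma tfRank_eq_one {A B : Subgroup G} (g0 : G) (hg0 : g0 ∈ A)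
    (hfree : ∀ m : ℤ, g0 ^ m ∈ B → m = 0)
    (φ : A →* Multiplicative ℤ) (hφ : ∀ a : A, φ a = 1 → (a : G) ∈ B) :
    tfRank A B = 1 := by
  rw [tfRank_eq_sSup]
  apply IsGreatest.csSup_eq
  constructor
  · refine ⟨fun _ => g0, fun _ => hg0, ?_⟩
    intro x hx i
    have h1 : (List.ofFn (fun i : Fin 1 => g0 ^ x i)).prod = g0 ^ x 0 := by
      simp [List.ofFn_succ]
    rw [h1] at hx
    have := hfree _ hx
    have hi : i = 0 := Subsingleton.elim _ _
    rw [hi]; exact this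
  · intro n hn
    by_contra hgt
    push_neg at hgt
    obtain ⟨f, hfA, hfree'⟩ := hn
    have h0 : 0 < n := by omega
    have h1 : 1 < n := by omega
    set i0 : Fin n := ⟨0, h0⟩ with hi0
    set i1 : Fin n := ⟨1, h1⟩ with hi1
    have hne : i0 ≠ i1 := by
      simp [hi0, hi1, Fin.ext_iff]
    set g : Fin n → A := fun i => ⟨f i, hfA i⟩ with hg
    set a : Fin n → ℤ := fun i => (φ (g i)).toAdd with ha
    have key : ∀ x : Fin n → ℤ, (∑ i, x i * a i) = 0 → ∀ i, x i = 0 := by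
      intro x hsum
      apply hfree'
      have hP : (List.ofFn (fun i => f i ^ x i)).prod =
          ((List.ofFn (fun i => g i ^ x i)).prod : A) := by
        rw [show ((((List.ofFn fun i => g i ^ x i)).prod : A) : G)
            = A.subtype (List.ofFn fun i => g i ^ x i).prod from rfl,
          map_list_prod, List.map_ofFn]
        congr 1
      rw [hP]
      apply hφ
      have : φ (List.ofFn (fun i => g i ^ x i)).prod =
          Multiplicative.ofAdd (∑ i, x i * a i) := by
        rw [map_list_prod φ, List.map_ofFn]
        have : (List.ofFn (φ ∘ fun i => g i ^ x i)).prod.toAdd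
            = ∑ i, x i * a i := by
          rw [toAdd_listprod]
          apply Finset.sum_congr rfl
          intro i _
          simp only [Function.comp, map_zpow, ha]
          rw [toAdd_zpow, smul_eq_mul]
        rw [← this, ofAdd_toAdd]
      rw [this, hsum]
      rfl
    -- choose a relation
    by_cases ha1 : a i1 = 0
    · have := key (fun i => if i = i1 then 1 else 0) ?_ i1
      · simp at this
      · have : ∀ i : Fin n, (if i = i1 then (1:ℤ) else 0) * a i
            = if i = i1 then a i1 else 0 := by
          intro i; split_ifs with h <;> simp [h]
        rw [Finset.sum_congr rfl (fun i _ => this i)]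
        simp [ha1]
    · have := key (fun i => if i = i0 then a i1 else if i = i1 then -(a i0) else 0) ?_ i0
      · simp at this
        exact ha1 this
      · have hptw : ∀ i : Fin n,
            (if i = i0 then a i1 else if i = i1 then -(a i0) else 0) * a i
            = (if i = i0 then a i1 * a i else 0)
              + (if i = i1 then -(a i0) * a i else 0) := by
          intro i
          by_cases h0' : i = i0
          · subst h0'
            simp [hne]
          · by_cases h1' : i = i1
            · subst h1'
              simp [h0']
            · simp [h0', h1']
        rw [Finset.sum_congr rfl (fun i _ => hptw i), Finset.sum_add_distrib]
        rw [Finset.sum_ite_eq' Finset.univ i0 (fun i => a i1 * a i),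
          Finset.sum_ite_eq' Finset.univ i1 (fun i => -(a i0) * a i)]
        simp
        ring

end Aux4
section Aux5
open Heis FC Subgroup

/-- abelianization onto the x coordinate -/
def xHom : Heis →* Multiplicative ℤ where
  toFun g := Multiplicative.ofAdd g.x
  map_one' := rfl
  map_mul' _ _ := rfl

/-- abelianization onto the y coordinate -/
def yHom : Heis →* Multiplicative ℤ where
  toFun g := Multiplicative.ofAdd g.y
  map_one' := rfl
  map_mul' _ _ := rfl

lemma ws3_mem {g : Heis}
    (hg : g ∈ weightSubgroup (![X, Y, Z ^ 5]) (![(1:ℝ), 3/2, 3]) 3) :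
    g.x = 0 ∧ g.y = 0 ∧ (5:ℤ) ∣ g.z := (le_of_eq ws_3) hg

/-- the hom `⟨0,0,5k⟩ ↦ k` on `G^𝔴(3)` -/
noncomputable def zdivHom : (weightSubgroup (![X, Y, Z ^ 5]) (![(1:ℝ), 3/2, 3]) 3) →*
    Multiplicative ℤ where
  toFun g := Multiplicative.ofAdd ((g : Heis).z / 5)
  map_one' := by
    show Multiplicative.ofAdd ((1 : Heis).z / 5) = 1
    rw [one_def]
    norm_num
  map_mul' a b := by
    obtain ⟨hax, -, haz⟩ := ws3_mem a.2
    obtain ⟨-, -, hbz⟩ := ws3_mem b.2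
    show Multiplicative.ofAdd (((a : Heis) * b).z / 5) = _
    rw [mul_def]
    simp only [hax, zero_mul, add_zero]
    rw [Int.add_ediv_of_dvd_left haz]
    rfl

lemma zdivHom_bij : Function.Bijective zdivHom := by
  constructor
  · intro a b h
    obtain ⟨hax, hay, haz⟩ := ws3_mem a.2
    obtain ⟨hbx, hby, hbz⟩ := ws3_mem b.2
    have hz : (a : Heis).z / 5 = (b : Heis).z / 5 := by
      simpa [zdivHom] using h
    have : (a : Heis).z = (b : Heis).z := by
      rw [← Int.ediv_mul_cancel haz, ← Int.ediv_mul_cancel hbz, hz]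
    apply Subtype.ext
    apply Heis.ext <;> simp [hax, hay, hbx, hby, this]
  · intro c
    have hmem : (⟨0, 0, 5 * c.toAdd⟩ : Heis) ∈
        weightSubgroup (![X, Y, Z ^ 5]) (![(1:ℝ), 3/2, 3]) 3 :=
      (le_of_eq ws_3.symm) ⟨rfl, rfl, ⟨c.toAdd, rfl⟩⟩
    refine ⟨⟨_, hmem⟩, ?_⟩
    show Multiplicative.ofAdd ((5 * c.toAdd) / 5) = c
    rw [Int.mul_ediv_cancel_left _ (by norm_num)]
    exact ofAdd_toAdd c

lemma ws52_mem {g : Heis}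
    (hg : g ∈ weightSubgroup (![X, Y, Z ^ 5]) (![(1:ℝ), 3/2, 3]) (5/2)) :
    g.x = 0 ∧ g.y = 0 := (le_of_eq (ws_Kz (by norm_num) le_rfl)) hg

/-- the hom `⟨0,0,k⟩ ↦ k mod 5` on `G^𝔴(5/2)` -/
noncomputable def zmodHom : (weightSubgroup (![X, Y, Z ^ 5]) (![(1:ℝ), 3/2, 3]) (5/2)) →*
    Multiplicative (ZMod 5) where
  toFun g := Multiplicative.ofAdd (((g : Heis).z : ZMod 5))
  map_one' := by
    show Multiplicative.ofAdd (((1 : Heis).z : ZMod 5)) = 1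
    rw [one_def]
    norm_num
  map_mul' a b := by
    obtain ⟨hax, -⟩ := ws52_mem a.2
    show Multiplicative.ofAdd ((((a : Heis) * b).z : ZMod 5)) = _
    rw [mul_def]
    simp only [hax, zero_mul, add_zero]
    push_cast
    rfl

lemma zmodHom_surj : Function.Surjective zmodHom := by
  intro c
  have hmem : (⟨0, 0, ((c.toAdd.val : ℕ) : ℤ)⟩ : Heis) ∈
      weightSubgroup (![X, Y, Z ^ 5]) (![(1:ℝ), 3/2, 3]) (5/2) :=
    (le_of_eq (ws_Kz (by norm_num) le_rfl).symm) ⟨rfl, rfl⟩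
  refine ⟨⟨_, hmem⟩, ?_⟩
  show Multiplicative.ofAdd ((((c.toAdd.val : ℕ) : ℤ) : ZMod 5)) = c
  push_cast
  rw [ZMod.natCast_val, ZMod.cast_id]
  exact ofAdd_toAdd c

lemma zmodHom_ker : zmodHom.ker =
    (weightSubgroup (![X, Y, Z ^ 5]) (![(1:ℝ), 3/2, 3]) 3).subgroupOf
      (weightSubgroup (![X, Y, Z ^ 5]) (![(1:ℝ), 3/2, 3]) (5/2)) := by
  ext g
  obtain ⟨hx, hy⟩ := ws52_mem g.2
  rw [MonoidHom.mem_ker, Subgroup.mem_subgroupOf]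
  have h1 : zmodHom g = Multiplicative.ofAdd (((g : Heis).z : ZMod 5)) := rfl
  rw [h1]
  constructor
  · intro h
    have : (((g : Heis).z : ZMod 5)) = 0 := by
      simpa using h
    have hdvd : (5:ℤ) ∣ (g : Heis).z := by
      rwa [ZMod.intCast_zmod_eq_zero_iff_dvd] at this
    exact (le_of_eq ws_3.symm) ⟨hx, hy, hdvd⟩
  · intro h
    obtain ⟨-, -, hdvd⟩ := ws3_mem h
    have : (((g : Heis).z : ZMod 5)) = 0 := by
      rwa [ZMod.intCast_zmod_eq_zero_iff_dvd]
    rw [this]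
    rfl

lemma xHom_surj : Function.Surjective xHom := by
  intro c
  exact ⟨⟨c.toAdd, 0, 0⟩, ofAdd_toAdd c⟩

lemma xHom_ker : xHom.ker = weightSubgroup (![X, Y, Z ^ 5]) (![(1:ℝ), 3/2, 3]) (3/2) := by
  rw [ws_32]
  ext g
  rw [MonoidHom.mem_ker, mem_Kyz]
  show Multiplicative.ofAdd g.x = 1 ↔ _
  simp

/-- the y-coordinate hom on `G^𝔴(3/2)` -/
noncomputable def yHom' : (weightSubgroup (![X, Y, Z ^ 5]) (![(1:ℝ), 3/2, 3]) (3/2)) →*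
    Multiplicative ℤ :=
  yHom.comp (weightSubgroup (![X, Y, Z ^ 5]) (![(1:ℝ), 3/2, 3]) (3/2)).subtype

lemma yHom'_surj : Function.Surjective yHom' := by
  intro c
  have hmem : (⟨0, c.toAdd, 0⟩ : Heis) ∈
      weightSubgroup (![X, Y, Z ^ 5]) (![(1:ℝ), 3/2, 3]) (3/2) :=
    (le_of_eq ws_32.symm) rfl
  exact ⟨⟨_, hmem⟩, ofAdd_toAdd c⟩

lemma yHom'_ker : yHom'.ker =
    (weightSubgroup (![X, Y, Z ^ 5]) (![(1:ℝ), 3/2, 3]) 2).subgroupOf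
      (weightSubgroup (![X, Y, Z ^ 5]) (![(1:ℝ), 3/2, 3]) (3/2)) := by
  ext g
  have hx : (g : Heis).x = 0 := (le_of_eq ws_32) g.2
  rw [MonoidHom.mem_ker, Subgroup.mem_subgroupOf]
  have h1 : yHom' g = Multiplicative.ofAdd (g : Heis).y := rfl
  rw [h1, ws_Kz (by norm_num : (3:ℝ)/2 < 2) (by norm_num), mem_Kz]
  constructor
  · intro h
    have : (g : Heis).y = 0 := by simpa using h
    exact ⟨hx, this⟩
  · intro h
    rw [h.2]
    rfl

/-- rank computations -/
lemma rank1 : tfRank (weightSubgroup (![X, Y, Z ^ 5]) (![(1:ℝ), 3/2, 3]) 1)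
    (weightSubgroup (![X, Y, Z ^ 5]) (![(1:ℝ), 3/2, 3]) (3/2)) = 1 := by
  refine tfRank_eq_one X (X_mem le_rfl) ?_
    (xHom.comp (weightSubgroup (![X, Y, Z ^ 5]) (![(1:ℝ), 3/2, 3]) 1).subtype) ?_
  · intro m hm
    rw [ws_32] at hm
    rw [X_zpow] at hm
    exact hm
  · intro a h
    rw [ws_32, mem_Kyz]
    have : Multiplicative.ofAdd (a : Heis).x = 1 := h
    simpa using this

lemma rank2 : tfRank (weightSubgroup (![X, Y, Z ^ 5]) (![(1:ℝ), 3/2, 3]) (3/2))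
    (weightSubgroup (![X, Y, Z ^ 5]) (![(1:ℝ), 3/2, 3]) 2) = 1 := by
  refine tfRank_eq_one Y (Y_mem le_rfl) ?_ yHom' ?_
  · intro m hm
    rw [ws_Kz (by norm_num) (by norm_num), Y_zpow] at hm
    exact hm.2
  · intro a h
    have hx : (a : Heis).x = 0 := (le_of_eq ws_32) a.2
    rw [ws_Kz (by norm_num) (by norm_num), mem_Kz]
    have : Multiplicative.ofAdd (a : Heis).y = 1 := h
    exact ⟨hx, by simpa using this⟩

lemma rank3 : tfRank (weightSubgroup (![X, Y, Z ^ 5]) (![(1:ℝ), 3/2, 3]) 2)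
    (weightSubgroup (![X, Y, Z ^ 5]) (![(1:ℝ), 3/2, 3]) (5/2)) = 0 := by
  apply tfRank_eq_zero_of_le
  rw [ws_Kz (by norm_num) (by norm_num), ws_Kz (by norm_num) (by norm_num)]

lemma rank4 : tfRank (weightSubgroup (![X, Y, Z ^ 5]) (![(1:ℝ), 3/2, 3]) (5/2))
    (weightSubgroup (![X, Y, Z ^ 5]) (![(1:ℝ), 3/2, 3]) 3) = 0 := by
  apply tfRank_eq_zero_of_pow (k := 5) (by norm_num)
  intro g hg
  obtain ⟨hx, hy⟩ := ws52_mem hg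
  have hg5 : g = (⟨0, 0, g.z⟩ : Heis) := by ext <;> simp [hx, hy]
  rw [hg5, zpow_yz]
  exact (le_of_eq ws_3.symm) ⟨rfl, rfl, ⟨g.z, by ring⟩⟩

lemma rank5 : tfRank (weightSubgroup (![X, Y, Z ^ 5]) (![(1:ℝ), 3/2, 3]) 3)
    (weightSubgroup (![X, Y, Z ^ 5]) (![(1:ℝ), 3/2, 3]) (7/2)) = 1 := by
  refine tfRank_eq_one (Z ^ 5) (Z5_mem le_rfl) ?_ zdivHom ?_
  · intro m hm
    rw [ws_bot (by norm_num), Subgroup.mem_bot, Z5_eq, zpow_yz] at hm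
    have : m * 5 = 0 := congrArg Heis.z hm
    omega
  · intro a h
    rw [ws_bot (by norm_num), Subgroup.mem_bot]
    obtain ⟨hx, hy, hz⟩ := ws3_mem a.2
    have hz5 : (a : Heis).z / 5 = 0 := by simpa [zdivHom] using h
    have : (a : Heis).z = 0 := by
      rw [← Int.ediv_mul_cancel hz, hz5, zero_mul]
    ext <;> simp [hx, hy, this, one_def]

end Aux5
section Aux6
open Heis FC Subgroup

lemma val1 : (1:ℝ) ∈ weightVals (![(1:ℝ), 3/2, 3]) := ⟨FC.gen 0 true, wv0⟩
lemma val32 : (3/2:ℝ) ∈ weightVals (![(1:ℝ), 3/2, 3]) := ⟨FC.gen 1 true, wv1⟩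
lemma val3 : (3:ℝ) ∈ weightVals (![(1:ℝ), 3/2, 3]) := ⟨FC.gen 2 true, wv2⟩
lemma val2 : (2:ℝ) ∈ weightVals (![(1:ℝ), 3/2, 3]) :=
  ⟨FC.comm (FC.gen 0 true) (FC.gen 0 true),
    by rw [weight_comm, weight_gen, wv0]; norm_num⟩
lemma val52 : (5/2:ℝ) ∈ weightVals (![(1:ℝ), 3/2, 3]) :=
  ⟨FC.comm (FC.gen 0 true) (FC.gen 1 true),
    by rw [weight_comm, weight_gen, weight_gen, wv0, wv1]; norm_num⟩
lemma val72 : (7/2:ℝ) ∈ weightVals (![(1:ℝ), 3/2, 3]) :=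
  ⟨FC.comm (FC.comm (FC.gen 0 true) (FC.gen 0 true)) (FC.gen 1 true),
    by rw [weight_comm, weight_comm, weight_gen, weight_gen, wv0, wv1]; norm_num⟩

lemma nextVal_eq {t t' : ℝ} (ht' : t' ∈ weightVals (![(1:ℝ), 3/2, 3])) (hlt : t < t')
    (hbound : ∀ x ∈ weightVals (![(1:ℝ), 3/2, 3]), t < x → t' ≤ x) :
    nextVal (![(1:ℝ), 3/2, 3]) t = t' := by
  unfold nextVal
  apply le_antisymm
  · apply csInf_le
    · exact ⟨t, fun x hx => le_of_lt hx.2⟩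
    · exact ⟨ht', hlt⟩
  · apply le_csInf
    · exact ⟨t', ht', hlt⟩
    · rintro x ⟨hx, hlt'⟩
      exact hbound x hx hlt'

lemma next_step (k : ℕ) (hmem : ((k:ℝ)+1)/2 ∈ weightVals (![(1:ℝ), 3/2, 3])) :
    nextVal (![(1:ℝ), 3/2, 3]) ((k:ℝ)/2) = ((k:ℝ)+1)/2 := by
  apply nextVal_eq hmem (by linarith)
  rintro x ⟨c, rfl⟩ hx
  obtain ⟨m, hm, hw⟩ := exists_half c
  rw [hw] at hx ⊢
  have h1 : (k:ℝ) < m := by linarith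
  have h2 : k < m := by exact_mod_cast h1
  have h3 : (k:ℝ) + 1 ≤ m := by exact_mod_cast h2
  linarith

lemma next1 : nextVal (![(1:ℝ), 3/2, 3]) 1 = 3/2 := by
  have := next_step 2 (by norm_num [val32])
  norm_num at this
  convert this using 2 <;> norm_num

lemma next32 : nextVal (![(1:ℝ), 3/2, 3]) (3/2) = 2 := by
  have := next_step 3 (by norm_num [val2])
  norm_num at this
  convert this using 2 <;> norm_num

lemma next2 : nextVal (![(1:ℝ), 3/2, 3]) 2 = 5/2 := by
  have := next_step 4 (by norm_num [val52])
  norm_num at this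
  convert this using 2 <;> norm_num

lemma next52 : nextVal (![(1:ℝ), 3/2, 3]) (5/2) = 3 := by
  have := next_step 5 (by norm_num [val3])
  norm_num at this
  convert this using 2 <;> norm_num

lemma next3 : nextVal (![(1:ℝ), 3/2, 3]) 3 = 7/2 := by
  have := next_step 6 (by norm_num [val72])
  norm_num at this
  convert this using 2 <;> norm_num

lemma rank_term_zero {t : ℝ} (ht : t ∈ weightVals (![(1:ℝ), 3/2, 3]))
    (h1 : t ≠ 1) (h2 : t ≠ 3/2) (h3 : t ≠ 3) :
    t * (tfRank (weightSubgroup (![X, Y, Z ^ 5]) (![(1:ℝ), 3/2, 3]) t)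
      (weightSubgroup (![X, Y, Z ^ 5]) (![(1:ℝ), 3/2, 3])
        (nextVal (![(1:ℝ), 3/2, 3]) t)) : ℝ) = 0 := by
  obtain ⟨c, rfl⟩ := ht
  obtain ⟨m, hm, hw⟩ := exists_half c
  rw [hw] at h1 h2 h3 ⊢
  have hm2 : m ≠ 2 := by rintro rfl; exact h1 (by norm_num)
  have hm3 : m ≠ 3 := by rintro rfl; exact h2 (by norm_num)
  have hm6 : m ≠ 6 := by rintro rfl; exact h3 (by norm_num)
  rcases Nat.lt_or_ge m 7 with hlt | hge
  · interval_cases m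
    · exact absurd rfl hm2
    · exact absurd rfl hm3
    · -- m = 4, t = 2
      rw [show ((4:ℕ):ℝ)/2 = 2 by norm_num, next2, rank3]
      norm_num
    · -- m = 5, t = 5/2
      rw [show ((5:ℕ):ℝ)/2 = 5/2 by norm_num, next52, rank4]
      norm_num
    · exact absurd rfl hm6
  · have hgt : (3:ℝ) < (m:ℝ)/2 := by
      have : (7:ℝ) ≤ m := by exact_mod_cast hge
      linarith
    rw [ws_bot hgt, tfRank_eq_zero_of_le bot_le]
    norm_num

lemma dval_eq : Dval (![X, Y, Z ^ 5]) (![(1:ℝ), 3/2, 3]) = 11/2 := by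
  classical
  have hne1 : ((⟨1, val1⟩ : weightVals (![(1:ℝ), 3/2, 3])) ≠ ⟨3/2, val32⟩) := by
    intro h
    rw [Subtype.ext_iff] at h
    norm_num at h
  have hne2 : ((⟨1, val1⟩ : weightVals (![(1:ℝ), 3/2, 3])) ≠ ⟨3, val3⟩) := by
    intro h
    rw [Subtype.ext_iff] at h
    norm_num at h
  have hne3 : ((⟨3/2, val32⟩ : weightVals (![(1:ℝ), 3/2, 3])) ≠ ⟨3, val3⟩) := by
    intro h
    rw [Subtype.ext_iff] at h
    norm_num at h
  have key : Dval (![X, Y, Z ^ 5]) (![(1:ℝ), 3/2, 3]) =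
      ∑ t ∈ ({⟨1, val1⟩, ⟨3/2, val32⟩, ⟨3, val3⟩} :
        Finset (weightVals (![(1:ℝ), 3/2, 3]))),
        ((t : ℝ) * (tfRank (weightSubgroup (![X, Y, Z ^ 5]) (![(1:ℝ), 3/2, 3]) t)
          (weightSubgroup (![X, Y, Z ^ 5]) (![(1:ℝ), 3/2, 3])
            (nextVal (![(1:ℝ), 3/2, 3]) t)) : ℝ)) := by
    apply tsum_eq_sum
    intro b hb
    simp only [Finset.mem_insert, Finset.mem_singleton] at hb
    push_neg at hb
    obtain ⟨hb1, hb2, hb3⟩ := hb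
    apply rank_term_zero b.2
    · exact fun h => hb1 (Subtype.ext h)
    · exact fun h => hb2 (Subtype.ext h)
    · exact fun h => hb3 (Subtype.ext h)
  rw [key, Finset.sum_insert (by simp [hne1, hne2]),
    Finset.sum_insert (by simp [hne3]), Finset.sum_singleton]
  show (1:ℝ) * _ + ((3/2 :ℝ) * _ + (3:ℝ) * _) = 11/2
  rw [next1, next32, next3, rank1, rank2, rank5]
  norm_num

end Aux6
open Heis in
/-- The discrete Heisenberg group with generators
`s₁ = X, s₂ = Y, s₃ = Z⁵` and weights `1, 3/2, 3`: the weight filtration is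
`G^𝔴(7/2) = {e}`, `G^𝔴(3) = ⟨Z⁵⟩ ≅ ℤ`, `G^𝔴(5/2) = G^𝔴(2) = ⟨Z⟩` (the center),
`G^𝔴(3/2) = ⟨Y,Z⟩`, `G^𝔴(1) = G`; the quotient `G^𝔴(5/2)/G^𝔴(3) ≅ ℤ/5ℤ`, the
quotients at levels `1, 3/2, 3` are infinite cyclic, and
`D(S,𝔴) = 1 + 3/2 + 3 = 11/2`. -/
theorem statement16 :
    let S : Fin 3 → Heis := ![X, Y, Z ^ 5]
    let w : Fin 3 → ℝ := ![1, 3/2, 3]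
    weightSubgroup S w (7/2) = ⊥ ∧
    weightSubgroup S w 3 = Subgroup.closure {Z ^ 5} ∧
    (∃ φ : (weightSubgroup S w 3) →* Multiplicative ℤ, Function.Bijective φ) ∧
    weightSubgroup S w (5/2) = Subgroup.closure {Z} ∧
    weightSubgroup S w 2 = Subgroup.closure {Z} ∧
    weightSubgroup S w (3/2) = Subgroup.closure {Y, Z} ∧
    weightSubgroup S w 1 = ⊤ ∧
    -- `G^𝔴_4/G^𝔴_5 ≅ ℤ/5ℤ`
    (∃ φ : (weightSubgroup S w (5/2)) →* Multiplicative (ZMod 5),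
      Function.Surjective φ ∧
      φ.ker = (weightSubgroup S w 3).subgroupOf (weightSubgroup S w (5/2))) ∧
    -- `G^𝔴_1/G^𝔴_2 ≅ ℤ` and `G^𝔴_2/G^𝔴_3 ≅ ℤ`
    (∃ φ : Heis →* Multiplicative ℤ, Function.Surjective φ ∧
      φ.ker = weightSubgroup S w (3/2)) ∧
    (∃ φ : (weightSubgroup S w (3/2)) →* Multiplicative ℤ, Function.Surjective φ ∧
      φ.ker = (weightSubgroup S w 2).subgroupOf (weightSubgroup S w (3/2))) ∧
    -- ranks of the successive quotients and the exponent `D(S,𝔴)`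
    tfRank (weightSubgroup S w 1) (weightSubgroup S w (3/2)) = 1 ∧
    tfRank (weightSubgroup S w (3/2)) (weightSubgroup S w 2) = 1 ∧
    tfRank (weightSubgroup S w 2) (weightSubgroup S w (5/2)) = 0 ∧
    tfRank (weightSubgroup S w (5/2)) (weightSubgroup S w 3) = 0 ∧
    tfRank (weightSubgroup S w 3) (weightSubgroup S w (7/2)) = 1 ∧
    Dval S w = 11/2 := by
  
  intro S w
  refine ⟨?_, ?_, ?_, ?_, ?_, ?_, ?_, ?_, ?_, ?_, ?_, ?_, ?_, ?_, ?_, ?_⟩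
  · exact ws_bot (by norm_num)
  · exact ws_3.trans closure_Z5.symm
  · exact ⟨zdivHom, zdivHom_bij⟩
  · exact (ws_Kz (by norm_num) le_rfl).trans closure_Z.symm
  · exact (ws_Kz (by norm_num) (by norm_num)).trans closure_Z.symm
  · exact ws_32.trans closure_YZ.symm
  · exact ws_one
  · exact ⟨zmodHom, zmodHom_surj, zmodHom_ker⟩
  · exact ⟨xHom, xHom_surj, xHom_ker⟩
  · exact ⟨yHom', yHom'_surj, yHom'_ker⟩
  · exact rank1
  · exact rank2
  · exact rank3
  · exact rank4
  · exact rank5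
  · exact dval_eq
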